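/- Let l ≥ 3 be an integer and let x_1,…,x_l be distinct real numbers, with a_{i,j} = 1/(x_i − x_j) for i ≠ j. Then Σ_{σ ∈ S_l} a_{σ(1),σ(2)} · a_{σ(2),σ(3)} ⋯ a_{σ(l−1),σ(l)} · a_{σ(l),σ(1)} = 0, where S_l denotes the set of permutations of {1,…,l}. -/

import Mathlib

/-- For `l ≥ 3` and distinct reals `x_1,…,x_l`, with `a_{i,j} = 1/(x_i - x_j)`,
the sum over all permutations `σ` of the cyclic product
`a_{σ(1),σ(2)} a_{σ(2),σ(3)} ⋯ a_{σ(l-1),σ(l)} a_{σ(l),σ(1)}` vanishes.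
Here `finRotate l` sends `i` to `i+1` cyclically, so the product below is
exactly the cyclic product above. -/
theorem sum_cyclic_products_eq_zero (l : ℕ) (hl : 3 ≤ l) (x : Fin l → ℝ)
    (hx : Function.Injective x) :
    ∑ σ : Equiv.Perm (Fin l), ∏ i : Fin l,
      (1 / (x (σ i) - x (σ (finRotate l i)))) = 0 := by
  obtain ⟨m, rfl⟩ : ∃ m, l = m + 3 := ⟨l - 3, by omega⟩
  set a : Fin (m + 3) → Fin (m + 3) → ℝ := fun i j => 1 / (x i - x j) with ha
  -- antisymmetry
  have hanti : ∀ i j : Fin (m + 3), a j i = -a i j := by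
    intro i j
    simp only [ha, one_div]
    rw [← neg_sub (x i) (x j), inv_neg]
  -- partial fraction identity
  have key : ∀ u v w : Fin (m + 3), u ≠ v → v ≠ w → u ≠ w →
      a u v * a v w = a u w * (a u v + a v w) := by
    intro u v w huv hvw huw
    have h1 : x u - x v ≠ 0 := sub_ne_zero.mpr fun h => huv (hx h)
    have h2 : x v - x w ≠ 0 := sub_ne_zero.mpr fun h => hvw (hx h)
    have h3 : x u - x w ≠ 0 := sub_ne_zero.mpr fun h => huw (hx h)
    simp only [ha]
    field_simp
    ring
  set c : Equiv.Perm (Fin (m + 3)) := finRotate (m + 3) with hc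
  set lt : Fin (m + 3) := Fin.last (m + 2) with hlt
  have h0l : (0 : Fin (m + 3)) ≠ lt := by
    simp [hlt, Fin.ext_iff]
  have h1l : (1 : Fin (m + 3)) ≠ lt := by
    simp only [hlt, Fin.ne_iff_vne, Fin.val_one, Fin.val_last]
    omega
  have h01 : (0 : Fin (m + 3)) ≠ 1 := by
    simp [Fin.ext_iff]
  have hclast : c lt = 0 := finRotate_last
  have hc0 : c 0 = 1 := by
    rw [hc, finRotate_succ_apply, zero_add]
  set κ : Equiv.Perm (Fin (m + 3)) := c * Equiv.swap 0 lt with hκ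
  have hκ0 : κ 0 = 0 := by
    rw [hκ]; simp [Equiv.swap_apply_left, hclast]
  have hκlast : κ lt = 1 := by
    rw [hκ]; simp [Equiv.swap_apply_right, hc0]
  have hκother : ∀ i : Fin (m + 3), i ≠ 0 → i ≠ lt → κ i = c i := by
    intro i hi0 hil
    rw [hκ]
    simp [Equiv.swap_apply_of_ne_of_ne hi0 hil]
  -- the support of κ is contained in univ.erase 0
  have hκsupp : { i : Fin (m + 3) | κ i ≠ i } ⊆ ↑(Finset.univ.erase (0 : Fin (m + 3))) := by
    intro i hi
    simp only [Finset.coe_erase, Set.mem_diff, Set.mem_singleton_iff]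
    refine ⟨by simp, fun h => ?_⟩
    subst h
    exact hi hκ0
  -- the reduced cyclic product
  set Q : Equiv.Perm (Fin (m + 3)) → ℝ :=
    fun σ => ∏ i ∈ Finset.univ.erase 0, a (σ i) (σ (κ i)) with hQ
  -- Step A : splitting of each term
  have stepA : ∀ σ : Equiv.Perm (Fin (m + 3)),
      (∏ i : Fin (m + 3), a (σ i) (σ (c i)))
        = Q σ * a (σ lt) (σ 0) + Q σ * a (σ 0) (σ 1) := by
    intro σ
    have hmem1 : lt ∈ (Finset.univ : Finset (Fin (m + 3))) := Finset.mem_univ _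
    have hmem2 : (0 : Fin (m + 3)) ∈ Finset.univ.erase lt :=
      Finset.mem_erase.mpr ⟨h0l, Finset.mem_univ _⟩
    have hmem3 : lt ∈ Finset.univ.erase (0 : Fin (m + 3)) :=
      Finset.mem_erase.mpr ⟨h0l.symm ∘ Eq.symm ∘ id ∘ Eq.symm, Finset.mem_univ _⟩
    -- expand the full product
    rw [← Finset.mul_prod_erase Finset.univ _ hmem1, ← Finset.mul_prod_erase _ _ hmem2]
    -- expand Q
    have hQexp : Q σ = a (σ lt) (σ 1) *
        ∏ i ∈ (Finset.univ.erase lt).erase 0, a (σ i) (σ (c i)) := by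
      simp only [hQ]
      rw [← Finset.mul_prod_erase _ _ hmem3, hκlast, Finset.erase_right_comm]
      congr 1
      apply Finset.prod_congr rfl
      intro i hi
      simp only [Finset.mem_erase] at hi
      rw [hκother i hi.1 hi.2.1]
    rw [hQexp, hclast, hc0]
    have huv : σ lt ≠ σ 0 := fun h => h0l (σ.injective h).symm
    have hvw : σ 0 ≠ σ 1 := fun h => h01 (σ.injective h)
    have huw : σ lt ≠ σ 1 := fun h => h1l (σ.injective h).symm
    rw [← mul_assoc, key _ _ _ huv hvw huw]
    ring
  -- Step B : Q is invariant under right multiplication by κ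
  have stepB : ∀ σ : Equiv.Perm (Fin (m + 3)), Q (σ * κ) = Q σ := by
    intro σ
    simp only [hQ, Equiv.Perm.mul_apply]
    exact κ.prod_comp (Finset.univ.erase 0) (fun j => a (σ j) (σ (κ j))) hκsupp
  -- reindex the first sum
  have stepC : ∑ σ : Equiv.Perm (Fin (m + 3)), Q σ * a (σ lt) (σ 0)
      = ∑ σ : Equiv.Perm (Fin (m + 3)), Q σ * a (σ 1) (σ 0) := by
    rw [← Equiv.sum_comp (Equiv.mulRight κ) (fun σ => Q σ * a (σ lt) (σ 0))]
    apply Finset.sum_congr rfl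
    intro σ _
    simp only [Equiv.coe_mulRight]
    rw [stepB]
    congr 2
    · exact congrArg σ hκlast
    · exact congrArg σ hκ0
  calc ∑ σ : Equiv.Perm (Fin (m + 3)), ∏ i : Fin (m + 3),
        (1 / (x (σ i) - x (σ (finRotate (m + 3) i))))
      = ∑ σ : Equiv.Perm (Fin (m + 3)),
        (Q σ * a (σ lt) (σ 0) + Q σ * a (σ 0) (σ 1)) := by
        apply Finset.sum_congr rfl
        intro σ _
        exact stepA σ
    _ = (∑ σ : Equiv.Perm (Fin (m + 3)), Q σ * a (σ lt) (σ 0))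
        + ∑ σ : Equiv.Perm (Fin (m + 3)), Q σ * a (σ 0) (σ 1) := Finset.sum_add_distrib
    _ = 0 := by
        rw [stepC]
        rw [← Finset.sum_add_distrib]
        apply Finset.sum_eq_zero
        intro σ _
        rw [hanti (σ 0) (σ 1)]
        ring
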